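/- Let Ĉ be a symmetric positive semidefinite d×d matrix, H a q×d matrix, v ∈ ℝ^d, z ∈ ℝ^q, and β ∈ (0,1). Then |H(v − ĈHᵀ(I + HĈHᵀ)⁻¹(Hv − z))|² ≤ (1 + β/2)|Hv|² + (1 + 2/β)|z|². -/

import Mathlib

open Matrix

lemma kalman_aux_dot_nonneg {q : ℕ} {S : Matrix (Fin q) (Fin q) ℝ}
    (hS : S.PosSemidef) (u : Fin q → ℝ) : 0 ≤ u ⬝ᵥ (S *ᵥ u) := by
  simpa using hS.dotProduct_mulVec_nonneg u

/-- If `w = u + S u` with `S` psd, then `|u|² ≤ |w|²` and `|S u|² ≤ |w|²`. -/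
lemma kalman_aux_bound {q : ℕ} {S : Matrix (Fin q) (Fin q) ℝ}
    (hS : S.PosSemidef) (u : Fin q → ℝ) :
    (u ⬝ᵥ u ≤ (u + S *ᵥ u) ⬝ᵥ (u + S *ᵥ u)) ∧
      ((S *ᵥ u) ⬝ᵥ (S *ᵥ u) ≤ (u + S *ᵥ u) ⬝ᵥ (u + S *ᵥ u)) := by
  have h1 : 0 ≤ u ⬝ᵥ (S *ᵥ u) := kalman_aux_dot_nonneg hS u
  have hsym : (S *ᵥ u) ⬝ᵥ u = u ⬝ᵥ (S *ᵥ u) := by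
    rw [dotProduct_comm]
  have h2 : 0 ≤ (S *ᵥ u) ⬝ᵥ (S *ᵥ u) :=
    Finset.sum_nonneg fun i _ => mul_self_nonneg _
  have h3 : 0 ≤ u ⬝ᵥ u := Finset.sum_nonneg fun i _ => mul_self_nonneg _
  have hexp : (u + S *ᵥ u) ⬝ᵥ (u + S *ᵥ u)
      = u ⬝ᵥ u + 2 * (u ⬝ᵥ (S *ᵥ u)) + (S *ᵥ u) ⬝ᵥ (S *ᵥ u) := by
    rw [add_dotProduct, dotProduct_add, dotProduct_add, hsym]; ring
  constructor <;> rw [hexp] <;> linarith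

/-- Bound on the observable part of the Kalman analysis step:
`|H(v − ĈHᵀ(I + HĈHᵀ)⁻¹(Hv − z))|² ≤ (1 + β/2)|Hv|² + (1 + 2/β)|z|²`. -/
theorem kalman_analysis_observable_bound {d q : ℕ}
    (Chat : Matrix (Fin d) (Fin d) ℝ) (H : Matrix (Fin q) (Fin d) ℝ)
    (hC : Chat.PosSemidef) (v : Fin d → ℝ) (z : Fin q → ℝ)
    (β : ℝ) (hβ0 : 0 < β) (hβ1 : β < 1) :
    ∑ i, ((H *ᵥ (v - (Chat * Hᵀ * (1 + H * Chat * Hᵀ)⁻¹) *ᵥ (H *ᵥ v - z))) i) ^ 2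
      ≤ (1 + β / 2) * ∑ i, ((H *ᵥ v) i) ^ 2 + (1 + 2 / β) * ∑ i, (z i) ^ 2 := by
  set S : Matrix (Fin q) (Fin q) ℝ := H * Chat * Hᵀ with hSdef
  have hS : S.PosSemidef := by
    have := hC.mul_mul_conjTranspose_same H
    simpa [hSdef, conjTranspose_eq_transpose_of_trivial] using this
  have hpd : (1 + S).PosDef := Matrix.PosDef.add_posSemidef Matrix.PosDef.one hS
  have hunit : IsUnit (1 + S).det := isUnit_iff_isUnit_det _ |>.1 hpd.isUnit
  have hinv : (1 + S) * (1 + S)⁻¹ = 1 := mul_nonsing_inv _ hunit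
  -- the vector inside the norm
  set a : Fin q → ℝ := (1 + S)⁻¹ *ᵥ (H *ᵥ v) with ha
  set b : Fin q → ℝ := (S * (1 + S)⁻¹) *ᵥ z with hb
  have hkey : H *ᵥ (v - (Chat * Hᵀ * (1 + S)⁻¹) *ᵥ (H *ᵥ v - z)) = a + b := by
    have h1 : H *ᵥ (v - (Chat * Hᵀ * (1 + S)⁻¹) *ᵥ (H *ᵥ v - z))
        = H *ᵥ v - (S * (1 + S)⁻¹) *ᵥ (H *ᵥ v - z) := by
      rw [mulVec_sub, mulVec_mulVec]
      congr 1
      rw [hSdef]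
      simp only [Matrix.mul_assoc]
    rw [h1, mulVec_sub]
    have h2 : H *ᵥ v - (S * (1 + S)⁻¹) *ᵥ (H *ᵥ v) = a := by
      have : (1 : Matrix (Fin q) (Fin q) ℝ) - S * (1 + S)⁻¹ = (1 + S)⁻¹ := by
        calc (1 : Matrix (Fin q) (Fin q) ℝ) - S * (1 + S)⁻¹
            = (1 + S) * (1 + S)⁻¹ - S * (1 + S)⁻¹ := by rw [hinv]
          _ = (1 + S - S) * (1 + S)⁻¹ := by rw [sub_mul]
          _ = (1 + S)⁻¹ := by rw [add_sub_cancel_right, one_mul]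
      have h2' : (1 - S * (1 + S)⁻¹) *ᵥ (H *ᵥ v) = (1 + S)⁻¹ *ᵥ (H *ᵥ v) := by
        rw [this]
      rw [ha, ← h2', sub_mulVec, one_mulVec]
    rw [sub_sub_eq_add_sub, ← sub_add_eq_add_sub, h2]
  rw [hkey]
  -- norm bounds on a and b
  have hainv : (1 + S) *ᵥ a = H *ᵥ v := by
    rw [ha, mulVec_mulVec, hinv, one_mulVec]
  have hbinv : (1 + S) *ᵥ ((1 + S)⁻¹ *ᵥ z) = z := by
    rw [mulVec_mulVec, hinv, one_mulVec]
  have hasplit : H *ᵥ v = a + S *ᵥ a := by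
    rw [← hainv, add_mulVec, one_mulVec]
  have hbound_a : a ⬝ᵥ a ≤ (H *ᵥ v) ⬝ᵥ (H *ᵥ v) := by
    rw [hasplit]; exact (kalman_aux_bound hS a).1
  have hbz : b = S *ᵥ ((1 + S)⁻¹ *ᵥ z) := by
    rw [hb, mulVec_mulVec]
  have hzsplit : z = (1 + S)⁻¹ *ᵥ z + S *ᵥ ((1 + S)⁻¹ *ᵥ z) := by
    conv_lhs => rw [← hbinv]
    rw [add_mulVec, one_mulVec]
  have hbound_b : b ⬝ᵥ b ≤ z ⬝ᵥ z := by
    rw [hbz]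
    conv_rhs => rw [hzsplit]
    exact (kalman_aux_bound hS ((1 + S)⁻¹ *ᵥ z)).2
  -- Young's inequality pointwise
  have hpoint : ∀ i, ((a + b) i) ^ 2 ≤ (1 + β / 2) * (a i) ^ 2 + (1 + 2 / β) * (b i) ^ 2 := by
    intro i
    have hinv2 : β * (2 / β) = 2 := by field_simp
    have hsq := sq_nonneg (β * a i - 2 * b i)
    have hib : (a + b) i = a i + b i := rfl
    rw [hib]
    nlinarith [sq_nonneg (a i), sq_nonneg (b i), mul_pos hβ0 hβ0]
  have hsum : ∑ i, ((a + b) i) ^ 2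
      ≤ (1 + β / 2) * (a ⬝ᵥ a) + (1 + 2 / β) * (b ⬝ᵥ b) := by
    have hda : a ⬝ᵥ a = ∑ i, (a i) ^ 2 := by simp [dotProduct, pow_two]
    have hdb : b ⬝ᵥ b = ∑ i, (b i) ^ 2 := by simp [dotProduct, pow_two]
    rw [hda, hdb, Finset.mul_sum, Finset.mul_sum, ← Finset.sum_add_distrib]
    exact Finset.sum_le_sum fun i _ => hpoint i
  have hc1 : (0:ℝ) ≤ 1 + β / 2 := by linarith
  have hc2 : (0:ℝ) ≤ 1 + 2 / β := by positivity
  have hdv : (H *ᵥ v) ⬝ᵥ (H *ᵥ v) = ∑ i, ((H *ᵥ v) i) ^ 2 := by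
    simp [dotProduct, pow_two]
  have hdz : z ⬝ᵥ z = ∑ i, (z i) ^ 2 := by simp [dotProduct, pow_two]
  calc ∑ i, ((a + b) i) ^ 2
      ≤ (1 + β / 2) * (a ⬝ᵥ a) + (1 + 2 / β) * (b ⬝ᵥ b) := hsum
    _ ≤ (1 + β / 2) * ((H *ᵥ v) ⬝ᵥ (H *ᵥ v)) + (1 + 2 / β) * (z ⬝ᵥ z) := by
        gcongr
    _ = (1 + β / 2) * ∑ i, ((H *ᵥ v) i) ^ 2 + (1 + 2 / β) * ∑ i, (z i) ^ 2 := by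
        rw [hdv, hdz]
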